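/- Let 1 ≤ d ≤ r and 0 ≤ k ≤ r−1 be integers with d even. Then last(ĝ^{r,d}_k) > 0 whenever 2k > d + r, and last(ĝ^{r,d}_k) < 0 whenever 2k < d + r. Moreover, if r is even, then last(ĝ^{r,d}_{(d+r)/2}) = 0. -/

import Mathlib

/-- `vC r d i` is the number of tuples `(u₁,…,u_d) ∈ ℤ^d` with `0 ≤ uₗ ≤ r` for all `l`
and `u₁ + ⋯ + u_d = i`.  For `d = 0` this is `1` if `i = 0` and `0` otherwise. -/
def vC (r d : ℕ) (i : ℤ) : ℕ :=
  (Finset.univ.filter fun u : Fin d → Fin (r + 1) => (∑ l, ((u l : ℕ) : ℤ)) = i).card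

lemma vC_zero (r : ℕ) (i : ℤ) : vC r 0 i = if i = 0 then 1 else 0 := by
  unfold vC
  rcases eq_or_ne i 0 with h | h <;> simp [h, eq_comm]

lemma vC_neg (r d : ℕ) (i : ℤ) (h : i < 0) : vC r d i = 0 := by
  unfold vC
  rw [Finset.card_eq_zero, Finset.filter_eq_empty_iff]
  intro u _
  have : (0:ℤ) ≤ ∑ l, ((u l : ℕ) : ℤ) := Finset.sum_nonneg fun l _ => Int.ofNat_nonneg _
  omega

lemma vC_gt (r d : ℕ) (i : ℤ) (h : (d:ℤ) * r < i) : vC r d i = 0 := by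
  unfold vC
  rw [Finset.card_eq_zero, Finset.filter_eq_empty_iff]
  intro u _
  have : (∑ l, ((u l : ℕ) : ℤ)) ≤ ∑ _l : Fin d, (r:ℤ) := by
    refine Finset.sum_le_sum fun l _ => ?_
    exact_mod_cast Nat.le_of_lt_succ (u l).isLt
  simp at this
  omega

lemma vC_succ (r d : ℕ) (i : ℤ) :
    vC r (d+1) i = ∑ a : Fin (r+1), vC r d (i - (a:ℕ)) := by
  classical
  unfold vC
  rw [Finset.card_eq_sum_card_fiberwise (f := fun u : Fin (d+1) → Fin (r+1) => u 0)
    (t := Finset.univ) (fun x _ => Finset.mem_univ _)]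
  refine Finset.sum_congr rfl fun a _ => ?_
  refine Finset.card_nbij' (fun u => Fin.tail u) (fun v => Fin.cons a v) ?_ ?_ ?_ ?_
  · intro u hu
    simp only [Finset.mem_coe, Finset.mem_filter, Finset.mem_univ, true_and] at hu ⊢
    obtain ⟨h1, h2⟩ := hu
    rw [Fin.sum_univ_succ] at h1
    rw [h2] at h1
    simp only [Fin.tail]
    omega
  · intro v hv
    simp only [Finset.mem_coe, Finset.mem_filter, Finset.mem_univ, true_and] at hv ⊢
    constructor
    · rw [Fin.sum_univ_succ]
      simp only [Fin.cons_zero, Fin.cons_succ]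
      omega
    · simp
  · intro u _; exact Finset.mem_filter.mp ‹_› |>.2 ▸ (Fin.cons_self_tail u)
  · intro v _; ext l; simp [Fin.tail]

lemma vC_pos (r d : ℕ) (i : ℤ) (h0 : 0 ≤ i) (h1 : i ≤ (d:ℤ) * r) : 0 < vC r d i := by
  induction d generalizing i with
  | zero =>
    have : i = 0 := le_antisymm (by simpa using h1) h0
    simp [vC_zero, this]
  | succ d ih =>
    rw [vC_succ]
    have hdr : (((d:ℕ)+1 : ℕ):ℤ) * r = (d:ℤ)*r + r := by push_cast; ring
    set a0 : ℕ := min r i.toNat with ha0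
    have hfin : a0 < r + 1 := by omega
    have hbounds : (a0:ℤ) ≤ i ∧ i - (a0:ℤ) ≤ (d:ℤ)*r := by
      have hnn : (0:ℤ) ≤ (d:ℤ)*r := mul_nonneg (Int.ofNat_nonneg _) (Int.ofNat_nonneg _)
      have htn : ((i.toNat : ℕ) : ℤ) = i := Int.toNat_of_nonneg h0
      rcases le_total r i.toNat with h | h
      · rw [ha0, min_eq_left h]
        constructor
        · omega
        · omega
      · rw [ha0, min_eq_right h]
        constructor
        · omega
        · omega
    have hterm : 0 < vC r d (i - (((⟨a0, hfin⟩ : Fin (r+1)) : ℕ) : ℤ)) := by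
      have hval : (((⟨a0, hfin⟩ : Fin (r+1)) : ℕ) : ℤ) = (a0:ℤ) := rfl
      rw [hval]
      exact ih _ (by omega) (by omega)
    calc 0 < vC r d (i - (((⟨a0, hfin⟩ : Fin (r+1)) : ℕ) : ℤ)) := hterm
      _ ≤ ∑ a : Fin (r+1), vC r d (i - (a:ℕ)) :=
        Finset.single_le_sum (f := fun a : Fin (r+1) => vC r d (i - ((a:ℕ):ℤ)))
          (fun _ _ => Nat.zero_le _) (Finset.mem_univ _)

lemma vC_symm (r d : ℕ) (i : ℤ) : vC r d i = vC r d ((d:ℤ) * r - i) := by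
  induction d generalizing i with
  | zero => simp [vC_zero, neg_eq_zero]
  | succ d ih =>
    rw [vC_succ, vC_succ]
    refine Fintype.sum_equiv (Fin.revPerm) _ _ fun a => ?_
    have hle : (a:ℕ) ≤ r := Nat.le_of_lt_succ a.isLt
    have hrev : ((Fin.revPerm a : Fin (r+1)) : ℕ) = r - (a:ℕ) := by
      simp [Fin.val_rev]
    rw [ih, hrev]
    congr 1
    have hcast : (((r - (a:ℕ) : ℕ)):ℤ) = (r:ℤ) - ((a:ℕ):ℤ) := by
      push_cast [hle]; ring
    rw [hcast]
    push_cast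
    ring

lemma vC_chain (r d : ℕ)
    (hstep : ∀ i : ℤ, 0 ≤ i → 2*(i+1) ≤ (d:ℤ)*r → vC r d i < vC r d (i+1)) :
    ∀ n : ℕ, ∀ j : ℤ, 0 ≤ j → 2*(j + n) ≤ (d:ℤ)*r → vC r d j ≤ vC r d (j + n) := by
  intro n
  induction n with
  | zero => intro j _ _; simp
  | succ n ih =>
    intro j hj h
    have h1 : vC r d j ≤ vC r d (j + n) := ih j hj (by push_cast at h ⊢; omega)
    have h2 : vC r d (j + n) < vC r d (j + n + 1) :=
      hstep (j + n) (by positivity) (by push_cast at h ⊢; omega)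
    calc vC r d j ≤ vC r d (j + n) := h1
      _ ≤ vC r d (j + (n+1:ℕ)) := by
          apply Nat.le_of_lt; convert h2 using 2; push_cast; ring

lemma vC_cmp (r d : ℕ)
    (hstep : ∀ i : ℤ, 0 ≤ i → 2*(i+1) ≤ (d:ℤ)*r → vC r d i < vC r d (i+1))
    (j1 j2 : ℤ) (h2 : 0 ≤ j2) (h2' : j2 ≤ (d:ℤ)*r) (hlt : j1 < j2)
    (hsum : j1 + j2 < (d:ℤ)*r) : vC r d j1 < vC r d j2 := by
  rcases lt_or_ge j1 0 with h1 | h1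
  · rw [vC_neg r d j1 h1]
    exact vC_pos r d j2 h2 h2'
  · set j2' : ℤ := min j2 ((d:ℤ)*r - j2) with hj2'
    have hsymm : vC r d j2 = vC r d j2' := by
      rcases le_total j2 ((d:ℤ)*r - j2) with h | h
      · rw [hj2', min_eq_left h]
      · rw [hj2', min_eq_right h, ← vC_symm]
    have hj1lt : j1 + 1 ≤ j2' := by omega
    have hhalf : 2 * j2' ≤ (d:ℤ)*r := by omega
    rw [hsymm]
    have hfirst : vC r d j1 < vC r d (j1 + 1) := hstep j1 h1 (by omega)
    have hrest : vC r d (j1 + 1) ≤ vC r d (j1 + 1 + ((j2' - (j1+1)).toNat : ℕ)) := by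
      apply vC_chain r d hstep
      · omega
      · have : ((j2' - (j1+1)).toNat : ℤ) = j2' - (j1+1) := Int.toNat_of_nonneg (by omega)
        omega
    have heq : j1 + 1 + ((j2' - (j1+1)).toNat : ℤ) = j2' := by
      have : ((j2' - (j1+1)).toNat : ℤ) = j2' - (j1+1) := Int.toNat_of_nonneg (by omega)
      omega
    rw [heq] at hrest
    exact lt_of_lt_of_le hfirst hrest

lemma vC_step (r : ℕ) (hr : 1 ≤ r) :
    ∀ d : ℕ, 2 ≤ d → ∀ i : ℤ, 0 ≤ i → 2*(i+1) ≤ (d:ℤ)*r → vC r d i < vC r d (i+1) := by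
  intro d
  induction d using Nat.strong_induction_on with
  | _ d ih =>
    intro hd i h0 h1
    obtain ⟨e, rfl⟩ : ∃ e, d = e + 1 := ⟨d-1, by omega⟩
    have he : 1 ≤ e := by omega
    have hcast : (((e:ℕ)+1 : ℕ):ℤ) * r = (e:ℤ)*r + r := by push_cast; ring
    have her : (e:ℤ)*r ≤ (e:ℤ)*r := le_refl _
    have hrer : (r:ℤ) ≤ (e:ℤ)*r := by
      calc (r:ℤ) = 1 * r := (one_mul _).symm
        _ ≤ (e:ℤ)*r := by
            apply mul_le_mul_of_nonneg_right _ (Int.ofNat_nonneg r)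
            exact_mod_cast he
    have key : vC r e (i - r) < vC r e (i + 1) := by
      rcases lt_or_ge i (r:ℤ) with hi | hi
      · rw [vC_neg r e (i - r) (by omega)]
        exact vC_pos r e (i+1) (by omega) (by omega)
      · have he2 : 2 ≤ e := by
          by_contra hcon
          have : e = 1 := by omega
          subst this
          simp at hcast
          omega
        exact vC_cmp r e (ih e (by omega) he2) (i - r) (i + 1)
          (by omega) (by omega) (by omega) (by omega)
    rw [vC_succ, vC_succ]
    have hL : ∑ a : Fin (r+1), vC r e (i - (a:ℕ)) =
        (∑ a : Fin r, vC r e (i - (a:ℕ))) + vC r e (i - r) := by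
      rw [Fin.sum_univ_castSucc]
      simp [Fin.coe_castSucc, Fin.val_last]
    have hR : ∑ a : Fin (r+1), vC r e (i + 1 - (a:ℕ)) =
        vC r e (i + 1) + ∑ a : Fin r, vC r e (i - (a:ℕ)) := by
      rw [Fin.sum_univ_succ]
      congr 1
      · norm_num
      · refine Finset.sum_congr rfl fun a _ => ?_
        congr 1
        have : ((a.succ : Fin (r+1)) : ℕ) = (a:ℕ) + 1 := Fin.val_succ a
        rw [this]
        push_cast
        ring
    rw [hL, hR]
    omega

/-- `gHat r d k i` is the `(i+1)`-st entry (`0 ≤ i ≤ ⌊d/2⌋+1`) of the vector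
`ĝ^{r,d}_k ∈ ℤ^{⌊d/2⌋+2}`, defined by `g₀ = C(r−1,d,−k)` and
`g_i = C(r−1,d,ir−k) − C(r−1,d,(i−1)r−k)` for `i ≥ 1`; for `k ≥ r` the vector
`ĝ^{r,d}_k` is the zero vector.  The vector `g^{r,d}_k ∈ ℤ^{⌊d/2⌋+1}` is obtained
from `ĝ^{r,d}_k` by deleting its last entry, so its entries are `gHat r d k i`
for `0 ≤ i ≤ ⌊d/2⌋`; `last (g^{r,d}_k) = gHat r d k (d/2)` and
`last (ĝ^{r,d}_k) = gHat r d k (d/2 + 1)`. -/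
def gHat (r d k : ℕ) (i : ℕ) : ℤ :=
  if r ≤ k then 0
  else if i = 0 then (vC (r - 1) d (-(k : ℤ)) : ℤ)
  else (vC (r - 1) d ((i : ℤ) * (r : ℤ) - (k : ℤ)) : ℤ)
       - (vC (r - 1) d (((i : ℤ) - 1) * (r : ℤ) - (k : ℤ)) : ℤ)

lemma gHat_last (r d k m : ℕ) (hkr : k < r) :
    gHat r d k (m+1) = (vC (r-1) d (((m:ℤ)+1)*(r:ℤ) - (k:ℤ)) : ℤ)
      - (vC (r-1) d ((m:ℤ)*(r:ℤ) - (k:ℤ)) : ℤ) := by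
  unfold gHat
  rw [if_neg (by omega), if_neg (by omega)]
  have hA : (((m+1:ℕ)):ℤ)*(r:ℤ) - (k:ℤ) = ((m:ℤ)+1)*(r:ℤ) - (k:ℤ) := by push_cast; ring
  have hB : ((((m+1:ℕ)):ℤ)-1)*(r:ℤ) - (k:ℤ) = (m:ℤ)*(r:ℤ) - (k:ℤ) := by push_cast; ring
  rw [hA, hB]

set_option maxHeartbeats 1000000 in
/-- Let `1 ≤ d ≤ r` and `0 ≤ k ≤ r−1` with `d` even.  Then `last(ĝ^{r,d}_k) > 0`
whenever `2k > d + r`, and `last(ĝ^{r,d}_k) < 0` whenever `2k < d + r`.  Moreover,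
if `r` is even, then `last(ĝ^{r,d}_{(d+r)/2}) = 0`. -/
theorem stmt_14 (r d k : ℕ) (hd : 1 ≤ d) (hdr : d ≤ r) (heven : Even d) (hk : k ≤ r - 1) :
    (d + r < 2 * k → 0 < gHat r d k (d / 2 + 1)) ∧
    (2 * k < d + r → gHat r d k (d / 2 + 1) < 0) ∧
    (Even r → gHat r d ((d + r) / 2) (d / 2 + 1) = 0) := by
  obtain ⟨m, hm⟩ := heven
  have hm1 : 1 ≤ m := by omega
  have hr2 : 2 ≤ r := by omega
  have hd2' : 2 ≤ d := by omega
  have hdiv : d / 2 = m := by omega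
  have hstep := vC_step (r-1) (by omega) d (by omega)
  have hsC : (((r-1:ℕ)):ℤ) = (r:ℤ) - 1 := by push_cast; omega
  have hdC : ((d:ℕ):ℤ) = 2*(m:ℤ) := by push_cast [hm]; ring
  have hM1 : (1:ℤ) ≤ (m:ℤ) := by exact_mod_cast hm1
  have hRM : 2*(m:ℤ) ≤ (r:ℤ) := by rw [← hdC]; exact_mod_cast hdr
  have hR2 : (2:ℤ) ≤ (r:ℤ) := by exact_mod_cast hr2
  refine ⟨?_, ?_, ?_⟩
  · intro hlt
    have hkr : k < r := by omega
    have hKlt : 2*(k:ℤ) > (d:ℤ) + (r:ℤ) := by exact_mod_cast hlt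
    have hKle : (k:ℤ) ≤ (r:ℤ) - 1 := by
      have : k ≤ r - 1 := hk; omega
    rw [hdiv, gHat_last r d k m hkr]
    have key : vC (r-1) d ((m:ℤ)*(r:ℤ) - (k:ℤ)) < vC (r-1) d (((m:ℤ)+1)*(r:ℤ) - (k:ℤ)) := by
      rw [vC_symm (r-1) d (((m:ℤ)+1)*(r:ℤ) - (k:ℤ))]
      apply vC_cmp (r-1) d hstep
      · rw [hsC, hdC]
        linarith [mul_nonneg (by linarith : (0:ℤ) ≤ 2*(m:ℤ)-1) (by linarith : (0:ℤ) ≤ (r:ℤ)-1)]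
      · rw [hsC, hdC]
        linarith [mul_nonneg (by linarith : (0:ℤ) ≤ (m:ℤ)) (by linarith : (0:ℤ) ≤ (r:ℤ))]
      · rw [hsC, hdC]; linarith
      · rw [hsC, hdC]; linarith
    omega
  · intro hlt
    have hkr : k < r := by omega
    have hKlt : 2*(k:ℤ) < (d:ℤ) + (r:ℤ) := by exact_mod_cast hlt
    have hK0 : (0:ℤ) ≤ (k:ℤ) := Int.ofNat_nonneg _
    have hKle : (k:ℤ) ≤ (r:ℤ) - 1 := by
      have : k ≤ r - 1 := hk; omega
    rw [hdiv, gHat_last r d k m hkr]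
    have key : vC (r-1) d (((m:ℤ)+1)*(r:ℤ) - (k:ℤ)) < vC (r-1) d ((m:ℤ)*(r:ℤ) - (k:ℤ)) := by
      rw [vC_symm (r-1) d (((m:ℤ)+1)*(r:ℤ) - (k:ℤ))]
      apply vC_cmp (r-1) d hstep
      · linarith [mul_nonneg (by linarith : (0:ℤ) ≤ (m:ℤ)-1) (by linarith : (0:ℤ) ≤ (r:ℤ))]
      · rw [hsC, hdC]
        linarith [mul_nonneg (by linarith : (0:ℤ) ≤ (m:ℤ)) (by linarith : (0:ℤ) ≤ (r:ℤ)-2)]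
      · rw [hsC, hdC]; linarith
      · rw [hsC, hdC]; linarith
    omega
  · intro hreven
    obtain ⟨p, hp⟩ := hreven
    have hk0 : (d + r) / 2 = m + p := by omega
    rw [hk0, hdiv]
    rcases le_or_gt r (m + p) with hcase | hcase
    · unfold gHat
      rw [if_pos hcase]
    · rw [gHat_last r d (m+p) m hcase]
      have harg : (d:ℤ)*(((r-1:ℕ)):ℤ) - (((m:ℤ)+1)*(r:ℤ) - ((m+p:ℕ):ℤ)) =
          (m:ℤ)*(r:ℤ) - ((m+p:ℕ):ℤ) := by
        rw [hsC, hdC]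
        have hrp : (r:ℤ) = (p:ℤ) + (p:ℤ) := by exact_mod_cast hp
        push_cast
        rw [hrp]
        ring
      rw [vC_symm (r-1) d (((m:ℤ)+1)*(r:ℤ) - ((m+p:ℕ):ℤ)), harg]
      omega
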